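/- Let k be a field and A = k_{p_{ij}}[x_1,…,x_n] a skew polynomial ring. Fix s and suppose d = (d_1,…,d̂_s,…,d_n) ∈ ℕ^{n−1} satisfies ∏_{j≠s} p_{ij}^{d_j} = p_{is} for all i. Set f = x_1^{d_1} ⋯ x_{s−1}^{d_{s−1}} x_{s+1}^{d_{s+1}} ⋯ x_n^{d_n}. Then for any c ∈ k, the assignment x_s ↦ x_s + c f, x_i ↦ x_i (i ≠ s) extends to a k-algebra automorphism of A, and the assignment x_s ↦ c f, x_i ↦ 0 (i ≠ s) extends to a locally nilpotent k-derivation of A. -/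

import Mathlib

noncomputable section

/-- The defining relations of the skew polynomial ring `k_{p_{ij}}[x_1, …, x_n]`:
for `i < j`, `x_j * x_i` is identified with `p i j * (x_i * x_j)`. -/
def skewRel (k : Type*) [CommRing k] (n : ℕ) (p : Fin n → Fin n → k) :
    FreeAlgebra k (Fin n) → FreeAlgebra k (Fin n) → Prop := fun a b =>
  ∃ i j : Fin n, i < j ∧ a = FreeAlgebra.ι k j * FreeAlgebra.ι k i ∧
    b = algebraMap k _ (p i j) * (FreeAlgebra.ι k i * FreeAlgebra.ι k j)

/-- The skew polynomial ring `k_{p_{ij}}[x_1, …, x_n]`. -/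
abbrev SkewPoly (k : Type*) [CommRing k] (n : ℕ) (p : Fin n → Fin n → k) :=
  RingQuot (skewRel k n p)

/-- The generator `x_i` of the skew polynomial ring. -/
def SkewPoly.X (k : Type*) [CommRing k] (n : ℕ) (p : Fin n → Fin n → k) (i : Fin n) :
    SkewPoly k n p :=
  RingQuot.mkAlgHom k (skewRel k n p) (FreeAlgebra.ι k i)

namespace SkewAux

variable {k : Type*} [Field k] {n : ℕ} {p : Fin n → Fin n → k}

local notation "XX" => SkewPoly.X k n p
local notation "A" => SkewPoly k n p

lemma X_rel {a b : Fin n} (hab : a < b) :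
    XX b * XX a = p a b • (XX a * XX b) := by
  have h := RingQuot.mkAlgHom_rel k (s := skewRel k n p)
    (⟨a, b, hab, rfl, rfl⟩ : skewRel k n p _ _)
  simpa [SkewPoly.X, map_mul, AlgHom.commutes, Algebra.smul_def] using h

variable (hanti : ∀ i j, p i j * p j i = 1) (hdiag : ∀ i, p i i = 1)

include hanti hdiag in
lemma X_comm (a b : Fin n) : XX b * XX a = p a b • (XX a * XX b) := by
  rcases lt_trichotomy a b with h | rfl | h
  · exact X_rel h
  · simp [hdiag]
  · have h2 := X_rel (p := p) h
    rw [h2, smul_smul, hanti, one_smul]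

include hanti hdiag in
lemma X_pow_comm (i j : Fin n) (m : ℕ) :
    XX i * XX j ^ m = (p j i ^ m) • (XX j ^ m * XX i) := by
  induction m with
  | zero => simp
  | succ m ih =>
    rw [pow_succ, ← mul_assoc, ih, smul_mul_assoc, mul_assoc, X_comm hanti hdiag j i,
      mul_smul_comm, smul_smul, pow_succ, mul_assoc]

include hanti hdiag in
lemma X_list_comm (d : Fin n → ℕ) (i : Fin n) (L : List (Fin n)) :
    XX i * (L.map (fun j => XX j ^ d j)).prod =
      ((L.map (fun j => p j i ^ d j)).prod) • ((L.map (fun j => XX j ^ d j)).prod * XX i) := by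
  induction L with
  | nil => simp
  | cons a L ih =>
    simp only [List.map_cons, List.prod_cons]
    rw [← mul_assoc, X_pow_comm hanti hdiag i a (d a), smul_mul_assoc, mul_assoc, ih,
      mul_smul_comm, smul_smul, mul_assoc]

variable (s : Fin n) (d : Fin n → ℕ) (hds : d s = 0)
  (hd : ∀ i, ∏ j ∈ Finset.univ.erase s, p i j ^ d j = p i s)

include hanti hds hd in
lemma scalar_prod (i : Fin n) :
    ((List.finRange n).map (fun j => p j i ^ d j)).prod = p s i := by
  rw [← Fin.prod_univ_def]
  have h1 : ∀ j : Fin n, p j i = (p i j)⁻¹ := fun j =>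
    eq_inv_of_mul_eq_one_left (by rw [mul_comm]; exact hanti i j)
  calc ∏ j : Fin n, p j i ^ d j = ∏ j : Fin n, ((p i j) ^ d j)⁻¹ := by
        simp_rw [h1, inv_pow]
    _ = (∏ j : Fin n, (p i j) ^ d j)⁻¹ := by rw [← Finset.prod_inv_distrib]
    _ = (p i s)⁻¹ := by
        rw [← Finset.prod_erase Finset.univ (by rw [hds, pow_zero]), hd]
    _ = p s i := (eq_inv_of_mul_eq_one_left (hanti s i)).symm

variable {f : SkewPoly k n p}
  (hf : f = ((List.finRange n).map (fun (i : Fin n) => SkewPoly.X k n p i ^ d i)).prod)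

include hanti hdiag hds hd hf in
lemma X_mul_f (i : Fin n) : XX i * f = p s i • (f * XX i) := by
  rw [hf, X_list_comm hanti hdiag d i, scalar_prod hanti s d hds hd i]

include hanti hdiag hds hd hf in
lemma f_mul_X (i : Fin n) : f * XX i = p i s • (XX i * f) := by
  rw [X_mul_f hanti hdiag s d hds hd hf i, smul_smul, hanti, one_smul]

/-- Extensionality for algebra maps out of the skew polynomial ring. -/
lemma skew_hom_ext {B : Type*} [Semiring B] [Algebra k B] {φ₁ φ₂ : SkewPoly k n p →ₐ[k] B}
    (h : ∀ i, φ₁ (XX i) = φ₂ (XX i)) : φ₁ = φ₂ := by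
  apply RingQuot.ringQuot_ext'
  apply FreeAlgebra.hom_ext
  funext i
  simpa [SkewPoly.X] using h i

include hanti hdiag hds hd hf in
/-- The elementary endomorphism `x_s ↦ x_s + c • f`. -/
lemma exists_phi (c : k) : ∃ φ : SkewPoly k n p →ₐ[k] SkewPoly k n p,
    ∀ i, φ (XX i) = if i = s then XX s + c • f else XX i := by
  set v : Fin n → A := fun i => if i = s then XX s + c • f else XX i with hv
  have key1 : ∀ j : Fin n, XX j * (XX s + c • f) = p s j • ((XX s + c • f) * XX j) := by
    intro j
    calc XX j * (XX s + c • f) = XX j * XX s + c • (XX j * f) := by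
          rw [mul_add, mul_smul_comm]
      _ = p s j • (XX s * XX j) + c • (p s j • (f * XX j)) := by
          rw [X_comm hanti hdiag s j, X_mul_f hanti hdiag s d hds hd hf j]
      _ = p s j • (XX s * XX j + c • (f * XX j)) := by
          rw [smul_add, smul_comm c]
      _ = p s j • ((XX s + c • f) * XX j) := by
          rw [add_mul, smul_mul_assoc]
  have key2 : ∀ i : Fin n, (XX s + c • f) * XX i = p i s • (XX i * (XX s + c • f)) := by
    intro i
    calc (XX s + c • f) * XX i = XX s * XX i + c • (f * XX i) := by
          rw [add_mul, smul_mul_assoc]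
      _ = p i s • (XX i * XX s) + c • (p i s • (XX i * f)) := by
          rw [X_comm hanti hdiag i s, f_mul_X hanti hdiag s d hds hd hf i]
      _ = p i s • (XX i * XX s + c • (XX i * f)) := by
          rw [smul_add, smul_comm c]
      _ = p i s • (XX i * (XX s + c • f)) := by
          rw [mul_add, mul_smul_comm]
  have hvc : ∀ i j : Fin n, i < j → v j * v i = p i j • (v i * v j) := by
    intro i j hij
    have hijne : i ≠ j := ne_of_lt hij
    by_cases his : i = s
    · have hjs : j ≠ s := fun h => hijne (his.trans h.symm)
      rw [his]
      simp only [hv, if_pos rfl, if_neg hjs]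
      exact key1 j
    · by_cases hjs : j = s
      · rw [hjs]
        simp only [hv, if_pos rfl, if_neg his]
        exact key2 i
      · simp only [hv, if_neg his, if_neg hjs]
        exact X_comm hanti hdiag i j
  have hrel : ∀ ⦃x y : FreeAlgebra k (Fin n)⦄, skewRel k n p x y →
      (FreeAlgebra.lift k v) x = (FreeAlgebra.lift k v) y := by
    rintro x y ⟨i, j, hij, rfl, rfl⟩
    simp only [map_mul, FreeAlgebra.lift_ι_apply, AlgHom.commutes]
    rw [← Algebra.smul_def]
    exact hvc i j hij
  refine ⟨RingQuot.liftAlgHom k ⟨FreeAlgebra.lift k v, hrel⟩, fun i => ?_⟩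
  show RingQuot.liftAlgHom k ⟨FreeAlgebra.lift k v, hrel⟩
      (RingQuot.mkAlgHom k (skewRel k n p) (FreeAlgebra.ι k i)) = _
  rw [RingQuot.liftAlgHom_mkAlgHom_apply, FreeAlgebra.lift_ι_apply]

include hds hf in
lemma phi_fixes_f {φ : SkewPoly k n p →ₐ[k] SkewPoly k n p} {c : k}
    (hφ : ∀ i, φ (XX i) = if i = s then XX s + c • f else XX i) : φ f = f := by
  rw [hf, map_list_prod, List.map_map]
  congr 1
  apply List.map_congr_left
  intro i _
  show φ (XX i ^ d i) = XX i ^ d i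
  by_cases his : i = s
  · subst his; rw [hds]; simp
  · rw [map_pow, hφ i, if_neg his]

include hanti hdiag hds hd hf in
/-- The elementary derivation `x_s ↦ c • f`, `x_i ↦ 0`. -/
lemma exists_D (c : k) : ∃ D : SkewPoly k n p →ₗ[k] SkewPoly k n p,
    (∀ a b, D (a * b) = D a * b + a * D b) ∧
    (∀ i, D (XX i) = if i = s then c • f else 0) := by
  classical
  set δ : Fin n → A := fun i => if i = s then c • f else 0 with hδ
  set w : Fin n → TrivSqZeroExt A A :=
    fun i => TrivSqZeroExt.inl (XX i) + TrivSqZeroExt.inr (δ i) with hw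
  have hwfst : ∀ i, (w i).fst = XX i := by
    intro i; simp [hw]
  have hwsnd : ∀ i, (w i).snd = δ i := by
    intro i; simp [hw]
  have hvc : ∀ i j : Fin n, i < j → w j * w i = p i j • (w i * w j) := by
    intro i j hij
    have hijne : i ≠ j := ne_of_lt hij
    apply TrivSqZeroExt.ext
    · rw [TrivSqZeroExt.fst_mul, TrivSqZeroExt.fst_smul, TrivSqZeroExt.fst_mul,
        hwfst, hwfst]
      exact X_comm hanti hdiag i j
    · rw [TrivSqZeroExt.snd_mul, TrivSqZeroExt.snd_smul, TrivSqZeroExt.snd_mul,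
        hwfst, hwfst, hwsnd, hwsnd, smul_eq_mul, smul_eq_mul, op_smul_eq_mul,
        op_smul_eq_mul]
      by_cases his : i = s
      · have hjs : j ≠ s := fun h => hijne (his.trans h.symm)
        rw [his]
        simp only [hδ, if_pos rfl, if_neg hjs, zero_mul, mul_zero, add_zero, zero_add]
        rw [mul_smul_comm, X_mul_f hanti hdiag s d hds hd hf j, smul_comm,
          smul_mul_assoc]
      · by_cases hjs : j = s
        · rw [hjs]
          simp only [hδ, if_pos rfl, if_neg his, zero_mul, mul_zero, add_zero, zero_add]
          rw [smul_mul_assoc, f_mul_X hanti hdiag s d hds hd hf i, smul_comm,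
            mul_smul_comm]
        · simp only [hδ, if_neg his, if_neg hjs, zero_mul, mul_zero, add_zero, smul_zero]
  have hrel : ∀ ⦃x y : FreeAlgebra k (Fin n)⦄, skewRel k n p x y →
      (FreeAlgebra.lift k w) x = (FreeAlgebra.lift k w) y := by
    rintro x y ⟨i, j, hij, rfl, rfl⟩
    simp only [map_mul, FreeAlgebra.lift_ι_apply, AlgHom.commutes]
    rw [← Algebra.smul_def]
    exact hvc i j hij
  set ψ : SkewPoly k n p →ₐ[k] TrivSqZeroExt A A :=
    RingQuot.liftAlgHom k ⟨FreeAlgebra.lift k w, hrel⟩ with hψ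
  have hψX : ∀ i, ψ (XX i) = w i := by
    intro i
    show ψ (RingQuot.mkAlgHom k (skewRel k n p) (FreeAlgebra.ι k i)) = w i
    rw [hψ, RingQuot.liftAlgHom_mkAlgHom_apply, FreeAlgebra.lift_ι_apply]
  have hfst : ∀ a : A, (ψ a).fst = a := by
    intro a
    obtain ⟨y, rfl⟩ := RingQuot.mkAlgHom_surjective k (skewRel k n p) a
    induction y using FreeAlgebra.induction with
    | grade0 r =>
      rw [AlgHom.commutes, AlgHom.commutes, TrivSqZeroExt.algebraMap_eq_inl',
        TrivSqZeroExt.fst_inl]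
    | grade1 i =>
      show (ψ (XX i)).fst = XX i
      rw [hψX i, hwfst]
    | mul a b iha ihb => rw [map_mul, map_mul, TrivSqZeroExt.fst_mul, iha, ihb]
    | add a b iha ihb => rw [map_add, map_add, TrivSqZeroExt.fst_add, iha, ihb]
  refine ⟨{ toFun := fun a => (ψ a).snd,
            map_add' := fun a b => by
              show (ψ (a + b)).snd = (ψ a).snd + (ψ b).snd
              rw [map_add, TrivSqZeroExt.snd_add],
            map_smul' := fun r a => by
              show (ψ (r • a)).snd = r • (ψ a).snd
              rw [map_smul, TrivSqZeroExt.snd_smul] },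
    fun a b => ?_, fun i => ?_⟩
  · show (ψ (a * b)).snd = (ψ a).snd * b + a * (ψ b).snd
    rw [map_mul, TrivSqZeroExt.snd_mul, hfst, hfst, smul_eq_mul, op_smul_eq_mul]
    exact add_comm _ _
  · show (ψ (XX i)).snd = _
    rw [hψX i, hwsnd]


end SkewAux

section iterAux

variable {k A : Type*} [CommRing k] [Ring A] [Module k A] (D : A →ₗ[k] A)

lemma iter_zero (j : ℕ) : (⇑D)^[j] 0 = 0 := by
  induction j with
  | zero => rfl
  | succ j ih => rw [Function.iterate_succ_apply, map_zero, ih]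

lemma iter_add (j : ℕ) (a b : A) : (⇑D)^[j] (a + b) = (⇑D)^[j] a + (⇑D)^[j] b := by
  induction j generalizing a b with
  | zero => rfl
  | succ j ih =>
    simp only [Function.iterate_succ_apply, map_add, ih]

lemma iter_nil_mul (leib : ∀ a b, D (a * b) = D a * b + a * D b) :
    ∀ N m l (a b : A), m + l ≤ N → (⇑D)^[m] a = 0 → (⇑D)^[l] b = 0 →
      (⇑D)^[m + l] (a * b) = 0 := by
  intro N
  induction N with
  | zero =>
    intro m l a b hN ha hb
    obtain ⟨rfl, rfl⟩ : m = 0 ∧ l = 0 := by omega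
    simp only [Function.iterate_zero, id_eq] at ha
    rw [ha, zero_mul]
    exact iter_zero D _
  | succ N ih =>
    intro m l a b hN ha hb
    match m, l with
    | 0, l =>
      simp only [Function.iterate_zero, id_eq] at ha
      rw [ha, zero_mul, zero_add, iter_zero]
    | m + 1, 0 =>
      simp only [Function.iterate_zero, id_eq] at hb
      rw [hb, mul_zero, iter_zero]
    | m + 1, l + 1 =>
      have key : m + 1 + (l + 1) = (m + 1 + l) + 1 := by omega
      rw [key, Function.iterate_succ_apply, leib, iter_add]
      have h1 : (⇑D)^[m + (l + 1)] (D a * b) = 0 := by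
        refine ih m (l + 1) (D a) b (by omega) ?_ hb
        rw [← Function.iterate_succ_apply]; exact ha
      have h2 : (⇑D)^[(m + 1) + l] (a * D b) = 0 := by
        refine ih (m + 1) l a (D b) (by omega) ha ?_
        rw [← Function.iterate_succ_apply]; exact hb
      have e1 : m + (l + 1) = m + 1 + l := by omega
      rw [e1] at h1
      rw [h1, h2, add_zero]

lemma iter_stable {m : ℕ} {a : A} (ha : (⇑D)^[m] a = 0) {m' : ℕ} (h : m ≤ m') :
    (⇑D)^[m'] a = 0 := by
  obtain ⟨j, rfl⟩ := Nat.exists_eq_add_of_le h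
  rw [Nat.add_comm, Function.iterate_add_apply, ha, iter_zero]

end iterAux

theorem elementary_automorphism_and_lnd_of_skew_poly
    (k : Type*) [Field k] (n : ℕ) (p : Fin n → Fin n → k)
    (hanti : ∀ i j, p i j * p j i = 1) (hdiag : ∀ i, p i i = 1)
    (s : Fin n) (d : Fin n → ℕ) (hds : d s = 0)
    (hd : ∀ i, ∏ j ∈ Finset.univ.erase s, p i j ^ d j = p i s)
    (f : SkewPoly k n p)
    (hf : f = ((List.finRange n).map (fun (i : Fin n) => SkewPoly.X k n p i ^ d i)).prod)
    (c : k) :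
    (∃ g : SkewPoly k n p ≃ₐ[k] SkewPoly k n p,
      ∀ i : Fin n, g (SkewPoly.X k n p i) =
        if i = s then SkewPoly.X k n p s + c • f else SkewPoly.X k n p i) ∧
    (∃ D : SkewPoly k n p →ₗ[k] SkewPoly k n p,
      (∀ a b : SkewPoly k n p, D (a * b) = D a * b + a * D b) ∧
      (∀ i : Fin n, D (SkewPoly.X k n p i) = if i = s then c • f else 0) ∧
      (∀ a : SkewPoly k n p, ∃ m : ℕ, (⇑D)^[m] a = 0)) := by
  constructor
  · -- the automorphism
    obtain ⟨φ, hφ⟩ := SkewAux.exists_phi hanti hdiag s d hds hd hf c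
    obtain ⟨φ', hφ'⟩ := SkewAux.exists_phi hanti hdiag s d hds hd hf (-c)
    have hff : φ f = f := SkewAux.phi_fixes_f s d hds hf hφ
    have hff' : φ' f = f := SkewAux.phi_fixes_f s d hds hf hφ'
    have h1 : φ.comp φ' = AlgHom.id k (SkewPoly k n p) := by
      apply SkewAux.skew_hom_ext
      intro i
      simp only [AlgHom.coe_comp, Function.comp_apply, AlgHom.coe_id, id_eq, hφ' i]
      by_cases his : i = s
      · rw [if_pos his, map_add, map_smul, hφ s, if_pos rfl, hff, his]
        rw [add_assoc, ← add_smul]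
        simp
      · rw [if_neg his, hφ i, if_neg his]
    have h2 : φ'.comp φ = AlgHom.id k (SkewPoly k n p) := by
      apply SkewAux.skew_hom_ext
      intro i
      simp only [AlgHom.coe_comp, Function.comp_apply, AlgHom.coe_id, id_eq, hφ i]
      by_cases his : i = s
      · rw [if_pos his, map_add, map_smul, hφ' s, if_pos rfl, hff', his]
        rw [add_assoc, ← add_smul]
        simp
      · rw [if_neg his, hφ' i, if_neg his]
    refine ⟨AlgEquiv.ofAlgHom φ φ' h1 h2, fun i => ?_⟩
    simpa using hφ i
  · -- the derivation
    obtain ⟨D, leib, hDX⟩ := SkewAux.exists_D hanti hdiag s d hds hd hf c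
    have hD1 : D 1 = 0 := by
      have := leib 1 1
      rw [mul_one, one_mul, mul_one] at this
      have h2 : D 1 = D 1 + D 1 := this
      exact (right_eq_add.mp h2)
    have hDpow : ∀ i : Fin n, i ≠ s → ∀ m : ℕ, D (SkewPoly.X k n p i ^ m) = 0 := by
      intro i hi m
      induction m with
      | zero => rw [pow_zero]; exact hD1
      | succ m ih =>
        rw [pow_succ, leib, ih, zero_mul, zero_add, hDX i, if_neg hi, mul_zero]
    have hDg : ∀ i : Fin n, D (SkewPoly.X k n p i ^ d i) = 0 := by
      intro i
      by_cases his : i = s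
      · rw [his, hds, pow_zero]; exact hD1
      · exact hDpow i his (d i)
    have hDf : D f = 0 := by
      rw [hf]
      have : ∀ L : List (Fin n),
          D ((L.map (fun i => SkewPoly.X k n p i ^ d i)).prod) = 0 := by
        intro L
        induction L with
        | nil => simpa using hD1
        | cons a L ih =>
          rw [List.map_cons, List.prod_cons, leib, ih, mul_zero, add_zero, hDg a,
            zero_mul]
      exact this _
    have hD2 : ∀ i : Fin n, (⇑D)^[2] (SkewPoly.X k n p i) = 0 := by
      intro i
      show D (D (SkewPoly.X k n p i)) = 0
      rw [hDX i]
      by_cases his : i = s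
      · rw [if_pos his, map_smul, hDf, smul_zero]
      · rw [if_neg his, map_zero]
    refine ⟨D, leib, hDX, fun a => ?_⟩
    obtain ⟨y, rfl⟩ := RingQuot.mkAlgHom_surjective k (skewRel k n p) a
    induction y using FreeAlgebra.induction with
    | grade0 r =>
      refine ⟨1, ?_⟩
      show D _ = 0
      rw [AlgHom.commutes, Algebra.algebraMap_eq_smul_one, map_smul, hD1, smul_zero]
    | grade1 i => exact ⟨2, hD2 i⟩
    | mul a b iha ihb =>
      obtain ⟨ma, hma⟩ := iha
      obtain ⟨mb, hmb⟩ := ihb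
      refine ⟨ma + mb, ?_⟩
      rw [map_mul]
      exact iter_nil_mul D leib (ma + mb) ma mb _ _ le_rfl hma hmb
    | add a b iha ihb =>
      obtain ⟨ma, hma⟩ := iha
      obtain ⟨mb, hmb⟩ := ihb
      refine ⟨ma + mb, ?_⟩
      rw [map_add, iter_add]
      rw [iter_stable D hma (Nat.le_add_right _ _),
        iter_stable D hmb (Nat.le_add_left _ _), add_zero]
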